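/- arXiv:1409.2587 — 7 statements merged into one kernel-verified Lean document; each statement's English description precedes it below -/
import Mathlib

section
/- Let n ≥ 2, let P, Q : (0,∞) × ℝ → ℝ be differentiable in their second variable, and let σ : (0,∞) → (0,∞) be differentiable. For x, y ∈ ℝⁿ with x ≠ 0 and y ≠ 0, write u = |y|, r = |x|, s = ⟨x,y⟩/|y|, and define G^i(x,y) = u·P(r,s)·y^i + u²·Q(r,s)·x^i for i = 1,…,n. Then for all such x, y one has Σ_{m=1}^n ∂G^m/∂y^m(x,y) − Σ_{m=1}^n y^m · ∂/∂x^m[ln σ(|x|)] = (n+1)·u·P(r,s) + u·(r² − s²)·Q_s(r,s) + 2·u·s·Q(r,s) + u·f(r)·s, where Q_s denotes the partial derivative of Q in its second variable and f(r) = −σ'(r)/(r·σ(r)). -/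
open scoped RealInnerProductSpace


lemma hasDerivAt_norm_line {E : Type*} [NormedAddCommGroup E] [InnerProductSpace ℝ E]
    (y v : E) (hy : y ≠ 0) :
    HasDerivAt (fun t : ℝ => ‖y + t • v‖) (⟪y, v⟫ / ‖y‖) 0 := by
  have hline : HasDerivAt (fun t : ℝ => y + t • v) v 0 := by
    simpa using ((hasDerivAt_id (0:ℝ)).smul_const v).const_add y
  have hsq : HasDerivAt (fun t : ℝ => ‖y + t • v‖ ^ 2) (2 * ⟪y, v⟫) 0 := by
    have := hline.norm_sq
    simpa using this
  have hpos : (0:ℝ) < ‖y‖ := norm_pos_iff.mpr hy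
  have hsqrt : HasDerivAt Real.sqrt (1 / (2 * Real.sqrt (‖y‖ ^ 2))) (‖y + (0:ℝ) • v‖ ^ 2) := by
    have h0 : ‖y + (0:ℝ) • v‖ ^ 2 = ‖y‖ ^ 2 := by simp
    rw [h0]
    exact Real.hasDerivAt_sqrt (by positivity)
  have hD := hsqrt.comp 0 hsq
  have heq : (Real.sqrt ∘ fun t : ℝ => ‖y + t • v‖ ^ 2) = fun t : ℝ => ‖y + t • v‖ := by
    funext t; simp [Function.comp, Real.sqrt_sq (norm_nonneg _)]
  rw [heq] at hD
  refine hD.congr_deriv ?_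
  rw [Real.sqrt_sq (norm_nonneg y)]
  field_simp

lemma hasDerivAt_inner_line {E : Type*} [NormedAddCommGroup E] [InnerProductSpace ℝ E]
    (x y v : E) :
    HasDerivAt (fun t : ℝ => ⟪x, y + t • v⟫) ⟪x, v⟫ 0 := by
  have h : (fun t : ℝ => ⟪x, y + t • v⟫) = fun t : ℝ => ⟪x, y⟫ + t * ⟪x, v⟫ := by
    funext t; rw [inner_add_right, real_inner_smul_right]
  rw [h]
  simpa using ((hasDerivAt_id (0:ℝ)).mul_const (⟪x, v⟫ : ℝ)).const_add (⟪x, y⟫ : ℝ)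

lemma keyG {n : ℕ} (P Q : ℝ → ℝ → ℝ) (x y : EuclideanSpace ℝ (Fin n)) (hx : x ≠ 0) (hy : y ≠ 0)
    (hP : Differentiable ℝ (P ‖x‖)) (hQ : Differentiable ℝ (Q ‖x‖)) (m : Fin n) :
    deriv (fun t : ℝ => ‖y + t • EuclideanSpace.single m (1:ℝ)‖
        * P ‖x‖ (⟪x, y + t • EuclideanSpace.single m (1:ℝ)⟫ / ‖y + t • EuclideanSpace.single m (1:ℝ)‖)
        * ((y + t • EuclideanSpace.single m (1:ℝ)) m)
      + ‖y + t • EuclideanSpace.single m (1:ℝ)‖ ^ 2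
        * Q ‖x‖ (⟪x, y + t • EuclideanSpace.single m (1:ℝ)⟫ / ‖y + t • EuclideanSpace.single m (1:ℝ)‖)
        * x m) 0
    = ‖y‖ * P ‖x‖ (⟪x,y⟫/‖y‖)
      + (P ‖x‖ (⟪x,y⟫/‖y‖) / ‖y‖ - deriv (P ‖x‖) (⟪x,y⟫/‖y‖) * (⟪x,y⟫/‖y‖) / ‖y‖) * (y m)^2
      + (deriv (P ‖x‖) (⟪x,y⟫/‖y‖) + 2 * Q ‖x‖ (⟪x,y⟫/‖y‖)
          - deriv (Q ‖x‖) (⟪x,y⟫/‖y‖) * (⟪x,y⟫/‖y‖)) * (x m * y m)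
      + ‖y‖ * deriv (Q ‖x‖) (⟪x,y⟫/‖y‖) * (x m)^2 := by
  have hu : (0:ℝ) < ‖y‖ := norm_pos_iff.mpr hy
  have hyv : (⟪y, EuclideanSpace.single m (1:ℝ)⟫ : ℝ) = y m := by
    simp [EuclideanSpace.inner_single_right]
  have hxv : (⟪x, EuclideanSpace.single m (1:ℝ)⟫ : ℝ) = x m := by
    simp [EuclideanSpace.inner_single_right]
  have hN : HasDerivAt (fun t : ℝ => ‖y + t • EuclideanSpace.single m (1:ℝ)‖) (y m / ‖y‖) 0 := by
    have := hasDerivAt_norm_line y (EuclideanSpace.single m (1:ℝ)) hy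
    rwa [hyv] at this
  have hC : HasDerivAt (fun t : ℝ => (⟪x, y + t • EuclideanSpace.single m (1:ℝ)⟫ : ℝ)) (x m) 0 := by
    have := hasDerivAt_inner_line x y (EuclideanSpace.single m (1:ℝ))
    rwa [hxv] at this
  have hne : ‖y + (0:ℝ) • EuclideanSpace.single m (1:ℝ)‖ ≠ 0 := by
    simp [hu.ne']
  have hS := hC.div hN hne
  set S' : ℝ := (x m * ‖y + (0:ℝ) • EuclideanSpace.single m (1:ℝ)‖
      - ⟪x, y + (0:ℝ) • EuclideanSpace.single m (1:ℝ)⟫ * (y m / ‖y‖))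
      / ‖y + (0:ℝ) • EuclideanSpace.single m (1:ℝ)‖ ^ 2 with hS'def
  have hPc : HasDerivAt
      (fun t : ℝ => P ‖x‖ (⟪x, y + t • EuclideanSpace.single m (1:ℝ)⟫ / ‖y + t • EuclideanSpace.single m (1:ℝ)‖))
      (deriv (P ‖x‖) (⟪x,y⟫/‖y‖) * S') 0 := by
    refine HasDerivAt.comp 0 ?_ hS
    simpa using (hP _).hasDerivAt
  have hQc : HasDerivAt
      (fun t : ℝ => Q ‖x‖ (⟪x, y + t • EuclideanSpace.single m (1:ℝ)⟫ / ‖y + t • EuclideanSpace.single m (1:ℝ)‖))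
      (deriv (Q ‖x‖) (⟪x,y⟫/‖y‖) * S') 0 := by
    refine HasDerivAt.comp 0 ?_ hS
    simpa using (hQ _).hasDerivAt
  have hcoord : HasDerivAt (fun t : ℝ => (y + t • EuclideanSpace.single m (1:ℝ)) m) 1 0 := by
    have h : (fun t : ℝ => (y + t • EuclideanSpace.single m (1:ℝ)) m) = fun t : ℝ => y m + t := by
      funext t
      simp [EuclideanSpace.single_apply]
    rw [h]
    simpa using (hasDerivAt_id (0:ℝ)).const_add (y m)
  have H := ((hN.mul hPc).mul hcoord).add (((hN.pow 2).mul hQc).mul_const (x m))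
  simp only [Pi.mul_def, Pi.pow_def, Pi.add_def] at H
  rw [H.deriv]
  rw [hS'def]
  simp only [zero_smul, add_zero]
  have hc : (⟪x, y⟫ : ℝ) = ⟪x, y⟫ := rfl
  field_simp
  ring

lemma keyLog {n : ℕ} (σ : ℝ → ℝ) (x : EuclideanSpace ℝ (Fin n)) (hx : x ≠ 0)
    (hσpos : 0 < σ ‖x‖) (hσdiff : DifferentiableAt ℝ σ ‖x‖) (m : Fin n) :
    deriv (fun t : ℝ => Real.log (σ ‖x + t • EuclideanSpace.single m (1:ℝ)‖)) 0
    = deriv σ ‖x‖ * (x m / ‖x‖) / σ ‖x‖ := by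
  have hxv : (⟪x, EuclideanSpace.single m (1:ℝ)⟫ : ℝ) = x m := by
    simp [EuclideanSpace.inner_single_right]
  have hN : HasDerivAt (fun t : ℝ => ‖x + t • EuclideanSpace.single m (1:ℝ)‖) (x m / ‖x‖) 0 := by
    have := hasDerivAt_norm_line x (EuclideanSpace.single m (1:ℝ)) hx
    rwa [hxv] at this
  have hg : HasDerivAt σ (deriv σ ‖x‖) ‖x + (0:ℝ) • EuclideanSpace.single m (1:ℝ)‖ := by
    simpa using hσdiff.hasDerivAt
  have hcomp := hg.comp 0 hN
  have hne : σ ‖x + (0:ℝ) • EuclideanSpace.single m (1:ℝ)‖ ≠ 0 := by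
    simpa using hσpos.ne'
  have H := hcomp.log hne
  simp only [Function.comp_def] at H
  rw [H.deriv]
  simp

/-- Lemma 2.1: the S-curvature of a spherically symmetric Finsler metric with spray
coefficients `G^i = u P y^i + u² Q x^i`, with respect to a spherically symmetric
volume form `σ(|x|)dx`, equals `(n+1)uP + u(r²-s²)Q_s + 2usQ + u f(r) s`. -/
theorem spherically_symmetric_S_curvature
    (n : ℕ) (hn : 2 ≤ n)
    (P Q : ℝ → ℝ → ℝ) (σ : ℝ → ℝ)
    (hP : ∀ r > (0:ℝ), Differentiable ℝ (P r))
    (hQ : ∀ r > (0:ℝ), Differentiable ℝ (Q r))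
    (hσpos : ∀ r > (0:ℝ), 0 < σ r)
    (hσdiff : ∀ r > (0:ℝ), DifferentiableAt ℝ σ r)
    (x y : EuclideanSpace ℝ (Fin n)) (hx : x ≠ 0) (hy : y ≠ 0) :
    let u : ℝ := ‖y‖
    let r : ℝ := ‖x‖
    let s : ℝ := ⟪x, y⟫ / ‖y‖
    let G : Fin n → EuclideanSpace ℝ (Fin n) → EuclideanSpace ℝ (Fin n) → ℝ :=
      fun i x y => ‖y‖ * P ‖x‖ (⟪x, y⟫ / ‖y‖) * y i
        + ‖y‖ ^ 2 * Q ‖x‖ (⟪x, y⟫ / ‖y‖) * x i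
    let f : ℝ → ℝ := fun r => -(deriv σ r) / (r * σ r)
    (∑ m, deriv (fun t : ℝ => G m x (y + t • EuclideanSpace.single m (1:ℝ))) 0)
      - (∑ m, y m *
          deriv (fun t : ℝ => Real.log (σ ‖x + t • EuclideanSpace.single m (1:ℝ)‖)) 0)
      = (n + 1) * u * P r s + u * (r ^ 2 - s ^ 2) * deriv (Q r) s
        + 2 * u * s * Q r s + u * f r * s := by
  have hu : (0:ℝ) < ‖y‖ := norm_pos_iff.mpr hy
  have hr : (0:ℝ) < ‖x‖ := norm_pos_iff.mpr hx
  have hσp := hσpos ‖x‖ hr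
  show (∑ m, deriv (fun t : ℝ => ‖y + t • EuclideanSpace.single m (1:ℝ)‖
        * P ‖x‖ (⟪x, y + t • EuclideanSpace.single m (1:ℝ)⟫ / ‖y + t • EuclideanSpace.single m (1:ℝ)‖)
        * ((y + t • EuclideanSpace.single m (1:ℝ)) m)
      + ‖y + t • EuclideanSpace.single m (1:ℝ)‖ ^ 2
        * Q ‖x‖ (⟪x, y + t • EuclideanSpace.single m (1:ℝ)⟫ / ‖y + t • EuclideanSpace.single m (1:ℝ)‖)
        * x m) 0)
      - (∑ m, y m *
          deriv (fun t : ℝ => Real.log (σ ‖x + t • EuclideanSpace.single m (1:ℝ)‖)) 0)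
      = (n + 1) * ‖y‖ * P ‖x‖ (⟪x, y⟫ / ‖y‖)
        + ‖y‖ * (‖x‖ ^ 2 - (⟪x, y⟫ / ‖y‖) ^ 2) * deriv (Q ‖x‖) (⟪x, y⟫ / ‖y‖)
        + 2 * ‖y‖ * (⟪x, y⟫ / ‖y‖) * Q ‖x‖ (⟪x, y⟫ / ‖y‖)
        + ‖y‖ * (-(deriv σ ‖x‖) / (‖x‖ * σ ‖x‖)) * (⟪x, y⟫ / ‖y‖)
  have hinner : ∀ a b : EuclideanSpace ℝ (Fin n), (⟪a, b⟫ : ℝ) = ∑ m, a m * b m := by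
    intro a b
    simp [PiLp.inner_apply, RCLike.inner_apply, mul_comm]
  have hyy : ∑ m, (y m) ^ 2 = ‖y‖ ^ 2 := by
    rw [← real_inner_self_eq_norm_sq, hinner y y]
    exact Finset.sum_congr rfl fun m _ => sq (y m)
  have hxx : ∑ m, (x m) ^ 2 = ‖x‖ ^ 2 := by
    rw [← real_inner_self_eq_norm_sq, hinner x x]
    exact Finset.sum_congr rfl fun m _ => sq (x m)
  have hxy : ∑ m, x m * y m = ⟪x, y⟫ := (hinner x y).symm
  rw [Finset.sum_congr rfl fun m _ => keyG P Q x y hx hy (hP ‖x‖ hr) (hQ ‖x‖ hr) m,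
    Finset.sum_congr rfl fun m _ => congrArg (y m * ·) (keyLog σ x hx hσp (hσdiff ‖x‖ hr) m)]
  have hlog : ∀ m : Fin n, y m * (deriv σ ‖x‖ * (x m / ‖x‖) / σ ‖x‖)
      = deriv σ ‖x‖ / (‖x‖ * σ ‖x‖) * (x m * y m) := fun m => by ring
  rw [Finset.sum_congr rfl fun m _ => hlog m]
  simp only [Finset.sum_add_distrib, ← Finset.mul_sum, Finset.sum_const, Finset.card_univ,
    Fintype.card_fin, nsmul_eq_mul, hyy, hxx, hxy]
  field_simp
  ring
end

section
/- Let I ⊆ (0,∞) be an open interval, let c₂ : I → ℝ be continuous, and let g, G, E : I → ℝ be differentiable functions with g > 0, E > 0, satisfying g'(r) = (2/r − 4r³c₂(r))·g(r), G'(r) = 4r·c₂(r)·g(r), and E'(r) = −(2/r − 2r³c₂(r))·E(r) for all r ∈ I. Let ψ : ℝ → ℝ be differentiable. Define φ(r,s) = ψ(s²/(g(r) + s²·G(r)))·E(r)·s. Then at every point (r,s) ∈ I × ℝ with g(r) + s²·G(r) ≠ 0, φ satisfies the first-order linear partial differential equation ∂φ/∂r + (s/r − 2r·c₂(r)·(r²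 − s²)·s)·∂φ/∂s = −(1/r − 2r·c₂(r)·s²)·φ. -/
/-- Lemma 3.3 (verification half): the function
`φ(r,s) = ψ(s²/(g(r) + s² G(r))) · E(r) · s`, where
`g' = (2/r − 4r³c₂) g`, `G' = 4 r c₂ g` and `E' = −(2/r − 2r³c₂) E`,
solves the PDE  `φ_r + (s/r − 2 r c₂ (r²−s²) s) φ_s = −(1/r − 2 r c₂ s²) φ`. -/
theorem solution_of_characteristic_pde
    (I : Set ℝ) (hI_open : IsOpen I) (hI_conn : Convex ℝ I)
    (hI_pos : I ⊆ Set.Ioi (0:ℝ))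
    (c₂ g G E : ℝ → ℝ) (ψ : ℝ → ℝ)
    (hc₂ : ContinuousOn c₂ I)
    (hg_pos : ∀ r ∈ I, 0 < g r) (hE_pos : ∀ r ∈ I, 0 < E r)
    (hg : ∀ r ∈ I, HasDerivAt g ((2 / r - 4 * r ^ 3 * c₂ r) * g r) r)
    (hG : ∀ r ∈ I, HasDerivAt G (4 * r * c₂ r * g r) r)
    (hE : ∀ r ∈ I, HasDerivAt E (-(2 / r - 2 * r ^ 3 * c₂ r) * E r) r)
    (hψ : Differentiable ℝ ψ) :
    ∀ r ∈ I, ∀ s : ℝ, g r + s ^ 2 * G r ≠ 0 →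
      deriv (fun t : ℝ => ψ (s ^ 2 / (g t + s ^ 2 * G t)) * E t * s) r
        + (s / r - 2 * r * c₂ r * (r ^ 2 - s ^ 2) * s)
            * deriv (fun t : ℝ => ψ (t ^ 2 / (g r + t ^ 2 * G r)) * E r * t) s
        = -(1 / r - 2 * r * c₂ r * s ^ 2)
            * (ψ (s ^ 2 / (g r + s ^ 2 * G r)) * E r * s) := by
  intro r hrI s hD
  have hr : (0:ℝ) < r := hI_pos hrI
  have hr0 : r ≠ 0 := ne_of_gt hr
  have hgr := hg r hrI
  have hGr := hG r hrI
  have hEr := hE r hrI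
  set D : ℝ := g r + s ^ 2 * G r with hDdef
  set u : ℝ := s ^ 2 / D with hudef
  set dψ : ℝ := deriv ψ u with hdψ
  -- derivative in r
  have hden : HasDerivAt (fun t => g t + s ^ 2 * G t)
      ((2 / r - 4 * r ^ 3 * c₂ r) * g r + s ^ 2 * (4 * r * c₂ r * g r)) r :=
    hgr.add (hGr.const_mul (s ^ 2))
  have hu : HasDerivAt (fun t => s ^ 2 / (g t + s ^ 2 * G t))
      ((0 * D - s ^ 2 * ((2 / r - 4 * r ^ 3 * c₂ r) * g r + s ^ 2 * (4 * r * c₂ r * g r))) / D ^ 2)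
      r := (hasDerivAt_const r (s ^ 2)).div hden hD
  have hψu : HasDerivAt ψ dψ u := (hψ u).hasDerivAt
  have hcomp : HasDerivAt (fun t => ψ (s ^ 2 / (g t + s ^ 2 * G t)))
      (dψ * ((0 * D - s ^ 2 * ((2 / r - 4 * r ^ 3 * c₂ r) * g r + s ^ 2 * (4 * r * c₂ r * g r))) / D ^ 2))
      r := hψu.comp r hu
  have hφr : HasDerivAt (fun t : ℝ => ψ (s ^ 2 / (g t + s ^ 2 * G t)) * E t * s)
      ((dψ * ((0 * D - s ^ 2 * ((2 / r - 4 * r ^ 3 * c₂ r) * g r + s ^ 2 * (4 * r * c₂ r * g r))) / D ^ 2) * E r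
        + ψ u * (-(2 / r - 2 * r ^ 3 * c₂ r) * E r)) * s) r :=
    (hcomp.mul hEr).mul_const s
  -- derivative in s
  have hden2 : HasDerivAt (fun t : ℝ => g r + t ^ 2 * G r)
      ((2 * s) * G r) s := by
    have : HasDerivAt (fun t : ℝ => t ^ 2) (2 * s ^ 1) s := hasDerivAt_pow 2 s
    exact ((hasDerivAt_const s (g r)).add (this.mul_const (G r))).congr_deriv (by ring)
  have hv : HasDerivAt (fun t : ℝ => t ^ 2 / (g r + t ^ 2 * G r))
      (((2 * s) * D - s ^ 2 * ((2 * s) * G r)) / D ^ 2) s := by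
    have hnum : HasDerivAt (fun t : ℝ => t ^ 2) (2 * s) s := by
      simpa using hasDerivAt_pow 2 s
    exact hnum.div hden2 hD
  have hψv : HasDerivAt ψ dψ u := (hψ u).hasDerivAt
  have hcomp2 : HasDerivAt (fun t : ℝ => ψ (t ^ 2 / (g r + t ^ 2 * G r)))
      (dψ * (((2 * s) * D - s ^ 2 * ((2 * s) * G r)) / D ^ 2)) s := hψv.comp s hv
  have hφs : HasDerivAt (fun t : ℝ => ψ (t ^ 2 / (g r + t ^ 2 * G r)) * E r * t)
      ((dψ * (((2 * s) * D - s ^ 2 * ((2 * s) * G r)) / D ^ 2) * E r) * s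
        + (ψ u * E r) * 1) s := by
    have := ((hcomp2.mul_const (E r)).mul (hasDerivAt_id s))
    exact this
  rw [hφr.deriv, hφs.deriv]
  field_simp
  ring
end

section
/- Let I ⊆ (0,∞) be an open interval, let c₂ : I → ℝ be continuous, and let g, G : I → ℝ be differentiable with g > 0, satisfying g'(r) = (2/r − 4r³c₂(r))·g(r) and G'(r) = 4r·c₂(r)·g(r) for all r ∈ I. Suppose s : I → ℝ is differentiable and satisfies the characteristic ODE s'(r) = s(r)/r − 2r·c₂(r)·(r² − s(r)²)·s(r), and suppose g(r) + s(r)²·G(r) ≠ 0 for all r ∈ I. Then the function r ↦ s(r)²/(g(r) + s(r)²·G(r)) has derivative zero on I, i.e. s²/(g + s²G) is a first integral of the characteristic equation. -/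
/-- Lemma 3.3 (first integral): along a solution `s(r)` of the characteristic ODE
`s' = s/r − 2 r c₂ (r² − s²) s`, the quantity `s²/(g + s² G)` is constant, where
`g' = (2/r − 4r³c₂) g` and `G' = 4 r c₂ g`. -/
theorem first_integral_of_characteristic_ode
    (I : Set ℝ) (hI_open : IsOpen I) (hI_conn : Convex ℝ I)
    (hI_pos : I ⊆ Set.Ioi (0:ℝ))
    (c₂ g G s : ℝ → ℝ)
    (hc₂ : ContinuousOn c₂ I)
    (hg_pos : ∀ r ∈ I, 0 < g r)
    (hg : ∀ r ∈ I, HasDerivAt g ((2 / r - 4 * r ^ 3 * c₂ r) * g r) r)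
    (hG : ∀ r ∈ I, HasDerivAt G (4 * r * c₂ r * g r) r)
    (hs : ∀ r ∈ I, HasDerivAt s (s r / r - 2 * r * c₂ r * (r ^ 2 - s r ^ 2) * s r) r)
    (hne : ∀ r ∈ I, g r + s r ^ 2 * G r ≠ 0) :
    ∀ r ∈ I, HasDerivAt (fun t : ℝ => s t ^ 2 / (g t + s t ^ 2 * G t)) 0 r := by
  intro r hr
  have hr0 : r ≠ 0 := ne_of_gt (hI_pos hr)
  have hN : HasDerivAt (fun t : ℝ => s t ^ 2)
      ((2 : ℕ) * s r ^ 1 * (s r / r - 2 * r * c₂ r * (r ^ 2 - s r ^ 2) * s r)) r :=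
    (hs r hr).pow 2
  have hD : HasDerivAt (fun t : ℝ => g t + s t ^ 2 * G t)
      ((2 / r - 4 * r ^ 3 * c₂ r) * g r +
        (((2 : ℕ) * s r ^ 1 * (s r / r - 2 * r * c₂ r * (r ^ 2 - s r ^ 2) * s r)) * G r
          + s r ^ 2 * (4 * r * c₂ r * g r))) r :=
    (hg r hr).add (hN.mul (hG r hr))
  have h : HasDerivAt (fun t : ℝ => s t ^ 2 / (g t + s t ^ 2 * G t)) _ r := hN.div hD (hne r hr)
  convert h using 1
  field_simp
  ring
end

section
/- Let I ⊆ (0,∞) be an open interval, let c₂ : I → ℝ be continuous, and let E : I → ℝ be differentiable with E > 0 and E'(r) = −(2/r − 2r³c₂(r))·E(r) for all r ∈ I. Suppose s : I → ℝ is differentiable with s'(r) = s(r)/r − 2r·c₂(r)·(r² − s(r)²)·s(r), and p : I → ℝ is differentiable, never zero, and satisfies p'(r) = −(1/r − 2r·c₂(r)·s(r)²)·p(r) for all r ∈ I. Then the function r ↦ s(r)·E(r)/p(r) has derivative zero on I, i.e. it is constant on I. -/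
/-- Lemma 3.3 (second first integral): along a characteristic curve `s(r)` of the PDE,
with `p` playing the role of `φ` along the characteristic
(`p' = −(1/r − 2 r c₂ s²) p`) and `E' = −(2/r − 2r³c₂) E`, `E > 0`,
the quantity `s·E/p` is constant. -/
theorem second_first_integral_of_characteristic_ode
    (I : Set ℝ) (hI_open : IsOpen I) (hI_conn : Convex ℝ I)
    (hI_pos : I ⊆ Set.Ioi (0:ℝ))
    (c₂ E s p : ℝ → ℝ)
    (hc₂ : ContinuousOn c₂ I)
    (hE_pos : ∀ r ∈ I, 0 < E r)
    (hE : ∀ r ∈ I, HasDerivAt E (-(2 / r - 2 * r ^ 3 * c₂ r) * E r) r)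
    (hs : ∀ r ∈ I, HasDerivAt s (s r / r - 2 * r * c₂ r * (r ^ 2 - s r ^ 2) * s r) r)
    (hp_ne : ∀ r ∈ I, p r ≠ 0)
    (hp : ∀ r ∈ I, HasDerivAt p (-(1 / r - 2 * r * c₂ r * s r ^ 2) * p r) r) :
    ∀ r ∈ I, HasDerivAt (fun t : ℝ => s t * E t / p t) 0 r := by
  intro r hr
  have hr0 : r ≠ 0 := ne_of_gt (hI_pos hr)
  have hpne := hp_ne r hr
  have hd : HasDerivAt (fun t : ℝ => s t * E t / p t) _ r := (((hs r hr).mul (hE r hr)).div (hp r hr) hpne)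
  convert hd using 1
  simp only [Pi.mul_apply]
  field_simp
  ring
end

section
/- Let D ⊆ (0,∞) × ℝ be an open set, let φ : D → ℝ be twice continuously differentiable, and let b, c, c₁, c₂ : (0,∞) → ℝ. Suppose that at every (r,s) ∈ D the two equations hold: (i) r·[2(r²−s²)(c₁(r)+c₂(r)s²) − 1]·φ_s − s·φ_r + 2[b(r)·r·s + r·s·(c₁(r)+c₂(r)s²)]·φ + 2r·c(r)·φ² = 0, and (ii) r·[2(r²−s²)(c₁(r)+c₂(r)s²) − 1]·φ_ss − s·φ_rs + φ_r + 2r·(c₁(r)+c₂(r)s²)·(φ − s·φ_s) = 0, where subscripts denote partial derivatives. Then at every (r,s) ∈ D one has r·[2c₁(r)(r²−s²) − 1 − b(r)·s²]·φ_s − 2c(r)·r·s·φ·φ_s + (b(r)+2c₁(r))·r·s·φ + 2c(r)·r·φ² = 0. -/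
/-- Key computational step in the proof of Theorem 3.2: from the system (3.1),
differentiating the first equation in `s`, subtracting the second, and combining
with the first again yields
`r[2c₁(r²−s²) − 1 − bs²]φ_s − 2crsφφ_s + (b+2c₁)rsφ + 2crφ² = 0`. -/
theorem douglas_isotropic_S_curvature_key_equation
    (D : Set (ℝ × ℝ)) (hD_open : IsOpen D)
    (hD_sub : D ⊆ Set.Ioi (0:ℝ) ×ˢ (Set.univ : Set ℝ))
    (φ : ℝ → ℝ → ℝ) (b c c₁ c₂ : ℝ → ℝ)
    (hφ : ContDiffOn ℝ 2 (fun p : ℝ × ℝ => φ p.1 p.2) D) :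
    let φr : ℝ → ℝ → ℝ := fun r s => deriv (fun t : ℝ => φ t s) r
    let φs : ℝ → ℝ → ℝ := fun r s => deriv (fun t : ℝ => φ r t) s
    let φss : ℝ → ℝ → ℝ := fun r s => deriv (fun t : ℝ => φs r t) s
    let φrs : ℝ → ℝ → ℝ := fun r s => deriv (fun t : ℝ => φr r t) s
    (∀ r s : ℝ, (r, s) ∈ D →
        r * (2 * (r ^ 2 - s ^ 2) * (c₁ r + c₂ r * s ^ 2) - 1) * φs r s
          - s * φr r s
          + 2 * (b r * r * s + r * s * (c₁ r + c₂ r * s ^ 2)) * φ r s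
          + 2 * r * c r * (φ r s) ^ 2 = 0) →
    (∀ r s : ℝ, (r, s) ∈ D →
        r * (2 * (r ^ 2 - s ^ 2) * (c₁ r + c₂ r * s ^ 2) - 1) * φss r s
          - s * φrs r s + φr r s
          + 2 * r * (c₁ r + c₂ r * s ^ 2) * (φ r s - s * φs r s) = 0) →
    ∀ r s : ℝ, (r, s) ∈ D →
      r * (2 * c₁ r * (r ^ 2 - s ^ 2) - 1 - b r * s ^ 2) * φs r s
        - 2 * c r * r * s * φ r s * φs r s
        + (b r + 2 * c₁ r) * r * s * φ r s
        + 2 * c r * r * (φ r s) ^ 2 = 0 := by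
  intro φr φs φss φrs h1 h2 r s hrs
  set f : ℝ × ℝ → ℝ := fun p => φ p.1 p.2 with hfdef
  have hf1 : DifferentiableOn ℝ f D := hφ.differentiableOn (by norm_num)
  have hDf1 : DifferentiableOn ℝ (fun p => fderiv ℝ f p) D :=
    (hφ.fderiv_of_isOpen (m := 1) hD_open (by norm_num)).differentiableOn one_ne_zero
  have hfd : ∀ a b : ℝ, (a, b) ∈ D → HasFDerivAt f (fderiv ℝ f (a, b)) (a, b) :=
    fun a b h => (hf1.differentiableAt (hD_open.mem_nhds h)).hasFDerivAt
  have hγ : ∀ a b : ℝ, HasDerivAt (fun t : ℝ => ((a : ℝ), t)) (((0 : ℝ), (1 : ℝ))) b :=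
    fun a b => (hasDerivAt_const b a).prodMk (hasDerivAt_id b)
  have hδ : ∀ a b : ℝ, HasDerivAt (fun t : ℝ => (t, (b : ℝ))) (((1 : ℝ), (0 : ℝ))) a :=
    fun a b => (hasDerivAt_id a).prodMk (hasDerivAt_const a b)
  have hφt : ∀ a b : ℝ, (a, b) ∈ D →
      HasDerivAt (fun t => φ a t) (fderiv ℝ f (a, b) ((0 : ℝ), (1 : ℝ))) b :=
    fun a b h => (hfd a b h).comp_hasDerivAt b (hγ a b)
  have hφt' : ∀ a b : ℝ, (a, b) ∈ D →
      HasDerivAt (fun t => φ t b) (fderiv ℝ f (a, b) ((1 : ℝ), (0 : ℝ))) a :=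
    fun a b h => by have := (hfd a b h).comp_hasDerivAt a (hδ a b); exact this
  have eφs : ∀ a b : ℝ, (a, b) ∈ D → φs a b = fderiv ℝ f (a, b) ((0 : ℝ), (1 : ℝ)) :=
    fun a b h => (hφt a b h).deriv
  have eφr : ∀ a b : ℝ, (a, b) ∈ D → φr a b = fderiv ℝ f (a, b) ((1 : ℝ), (0 : ℝ)) :=
    fun a b h => (hφt' a b h).deriv
  have hmem : ∀ᶠ t in nhds s, (r, t) ∈ D :=
    ((continuous_const.prodMk continuous_id).continuousAt).preimage_mem_nhds
      (hD_open.mem_nhds hrs)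
  have hdf2 : HasDerivAt (fun t => fderiv ℝ f (r, t))
      (fderiv ℝ (fun p => fderiv ℝ f p) (r, s) ((0 : ℝ), (1 : ℝ))) s :=
    ((hDf1.differentiableAt (hD_open.mem_nhds hrs)).hasFDerivAt).comp_hasDerivAt s (hγ r s)
  have happ : ∀ v : ℝ × ℝ, HasDerivAt (fun t => fderiv ℝ f (r, t) v)
      ((fderiv ℝ (fun p => fderiv ℝ f p) (r, s) ((0 : ℝ), (1 : ℝ))) v) s := by
    intro v
    have h := hdf2.clm_apply (hasDerivAt_const s v)
    simpa using h
  have hφst : HasDerivAt (fun t => φs r t)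
      ((fderiv ℝ (fun p => fderiv ℝ f p) (r, s) ((0 : ℝ), (1 : ℝ))) ((0 : ℝ), (1 : ℝ))) s := by
    refine (happ ((0 : ℝ), (1 : ℝ))).congr_of_eventuallyEq ?_
    filter_upwards [hmem] with t ht
    exact eφs r t ht
  have hφrt : HasDerivAt (fun t => φr r t)
      ((fderiv ℝ (fun p => fderiv ℝ f p) (r, s) ((0 : ℝ), (1 : ℝ))) ((1 : ℝ), (0 : ℝ))) s := by
    refine (happ ((1 : ℝ), (0 : ℝ))).congr_of_eventuallyEq ?_
    filter_upwards [hmem] with t ht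
    exact eφr r t ht
  have eφss : φss r s = (fderiv ℝ (fun p => fderiv ℝ f p) (r, s)) ((0:ℝ),(1:ℝ)) ((0:ℝ),(1:ℝ)) := hφst.deriv
  have eφrs : φrs r s = (fderiv ℝ (fun p => fderiv ℝ f p) (r, s)) ((0:ℝ),(1:ℝ)) ((1:ℝ),(0:ℝ)) := hφrt.deriv
  have hφ0 : HasDerivAt (fun t => φ r t) (fderiv ℝ f (r, s) ((0 : ℝ), (1 : ℝ))) s := hφt r s hrs
  have ht2 : HasDerivAt (fun t : ℝ => t ^ 2) (2 * s) s := by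
    simpa using hasDerivAt_pow 2 s
  have hP1 := ((((((hasDerivAt_const s (r ^ 2)).sub ht2).const_mul 2).mul
      ((hasDerivAt_const s (c₁ r)).add (ht2.const_mul (c₂ r)))).sub_const (1 : ℝ)).const_mul r)
  have hP3 := (((hasDerivAt_id' (x:=s)).const_mul (b r * r)).add
      (((hasDerivAt_id' (x:=s)).const_mul r).mul
        ((hasDerivAt_const s (c₁ r)).add (ht2.const_mul (c₂ r))))).const_mul 2
  have hG := (((hP1.mul hφst).sub ((hasDerivAt_id' (x:=s)).mul hφrt)).add (hP3.mul hφ0)).add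
      ((hφ0.mul hφ0).const_mul (2 * r * c r))
  have E3 := (hG.congr_of_eventuallyEq
      (show (fun _ : ℝ => (0 : ℝ)) =ᶠ[nhds s] _ from by
        filter_upwards [hmem] with t ht
        simp only [Pi.mul_apply, Pi.add_apply, Pi.sub_apply]
        linear_combination -(h1 r t ht))).unique (hasDerivAt_const s 0)
  have h1' := h1 r s hrs
  have h2' := h2 r s hrs
  rw [eφs r s hrs, eφr r s hrs] at h1'
  rw [eφs r s hrs, eφr r s hrs] at E3
  rw [eφss, eφrs, eφs r s hrs, eφr r s hrs] at h2'
  rw [eφs r s hrs]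
  simp only [Pi.mul_apply, Pi.add_apply, Pi.sub_apply] at E3
  linear_combination h1' - s / 2 * E3 + s / 2 * h2'
end

section
/- Let n ≥ 1, let f, g, h : (0,∞) → ℝ be differentiable, and let x ∈ ℝⁿ with x ≠ 0; write r = |x| and assume f(r) ≠ 0 and f(r) + r²·g(r) ≠ 0. Define b_i(x) = h(|x|)·x_i and let Γ^k_{ij} = (1/2)·[ ((fg' − 2f'g)/(rf(f + r²g)))·x_i x_j x_k + ((2rg − f')/(r(f + r²g)))·x_k δ_{ij} + (f'/(rf))·(x_i δ_{kj} + x_j δ_{ki}) ] be the Christoffel symbols of the metric a_{ij} = f(r)δ_{ij} + g(r)x_i x_j. Then the covariant derivative b_{i;j} = ∂b_i/∂x^j − Σ_k b_k·Γ^k_{ij}, evaluated at x, equals (1/2)·(h·(r·f' + 2f)/(f + r²g))·δ_{ij} + ( h'/r − (1/2)·h·(r²·g' + 2f')/(r·(f + r²g)) )·x_i·x_j, where f, g, h and their derivatives are evaluated at r. -/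
open scoped RealInnerProductSpace

lemma norm_line_hasDerivAt {E : Type*} [NormedAddCommGroup E] [InnerProductSpace ℝ E]
    (x v : E) (hx : x ≠ 0) :
    HasDerivAt (fun t : ℝ => ‖x + t • v‖) (⟪x, v⟫ / ‖x‖) 0 := by
  have hline : HasDerivAt (fun t : ℝ => x + t • v) v 0 := by
    simpa using ((hasDerivAt_id (0:ℝ)).smul_const v).const_add x
  have hsq : HasDerivAt (fun t : ℝ => ‖x + t • v‖ ^ 2) (2 * ⟪x, v⟫) 0 := by
    simpa using hline.norm_sq
  have hne : ‖x + (0:ℝ) • v‖ ^ 2 ≠ 0 := by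
    simpa using pow_ne_zero 2 (norm_ne_zero_iff.2 hx)
  have := hsq.sqrt (by simpa using hne)
  have heq : (fun t : ℝ => Real.sqrt (‖x + t • v‖ ^ 2)) = fun t : ℝ => ‖x + t • v‖ := by
    funext t; exact Real.sqrt_sq (norm_nonneg _)
  rw [heq] at this
  convert this using 1
  have : Real.sqrt (‖x + (0:ℝ) • v‖ ^ 2) = ‖x‖ := by simp
  rw [this]; ring

/-- Covariant derivative of `b_i = h(|x|) x_i` with respect to the Levi-Civita
connection of `a_{ij} = f(r) δ_{ij} + g(r) x_i x_j`:
`b_{i;j} = ½ (h(rf'+2f)/(f+r²g)) δ_{ij} + (h'/r − ½ h(r²g'+2f')/(r(f+r²g))) x_i x_j`. -/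
theorem covariant_derivative_spherical_one_form
    (n : ℕ) (hn : 1 ≤ n) (f g h : ℝ → ℝ)
    (hfd : ∀ r > (0:ℝ), DifferentiableAt ℝ f r)
    (hgd : ∀ r > (0:ℝ), DifferentiableAt ℝ g r)
    (hhd : ∀ r > (0:ℝ), DifferentiableAt ℝ h r)
    (x : EuclideanSpace ℝ (Fin n)) (hx : x ≠ 0)
    (hfne : f ‖x‖ ≠ 0) (hfgne : f ‖x‖ + ‖x‖ ^ 2 * g ‖x‖ ≠ 0) :
    let r : ℝ := ‖x‖
    let f' : ℝ := deriv f r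
    let g' : ℝ := deriv g r
    let h' : ℝ := deriv h r
    let Γ : Fin n → Fin n → Fin n → ℝ := fun k i j =>
      (1 / 2) *
        ((f r * g' - 2 * f' * g r) / (r * f r * (f r + r ^ 2 * g r)) * x i * x j * x k
          + (2 * r * g r - f') / (r * (f r + r ^ 2 * g r)) * x k
              * (if i = j then (1:ℝ) else 0)
          + f' / (r * f r) * (x i * (if k = j then (1:ℝ) else 0)
              + x j * (if k = i then (1:ℝ) else 0)))
    ∀ i j : Fin n,
      deriv (fun t : ℝ => h ‖x + t • EuclideanSpace.single j (1:ℝ)‖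
          * (x + t • EuclideanSpace.single j (1:ℝ)) i) 0
        - ∑ k, (h r * x k) * Γ k i j
      = (1 / 2) * (h r * (r * f' + 2 * f r) / (f r + r ^ 2 * g r))
            * (if i = j then (1:ℝ) else 0)
        + (h' / r - (1 / 2) * (h r * (r ^ 2 * g' + 2 * f') / (r * (f r + r ^ 2 * g r))))
            * x i * x j := by
  intro r f' g' h' Γ i j
  have hr : (0:ℝ) < r := norm_pos_iff.2 hx
  have hrne : r ≠ 0 := hr.ne'
  -- inner product with single
  have hinner : ⟪x, EuclideanSpace.single j (1:ℝ)⟫ = x j := by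
    rw [EuclideanSpace.inner_single_right]; simp
  -- derivative of the norm along the line
  have hnorm : HasDerivAt (fun t : ℝ => ‖x + t • EuclideanSpace.single j (1:ℝ)‖)
      (x j / r) 0 := by
    simpa [hinner] using norm_line_hasDerivAt x (EuclideanSpace.single j (1:ℝ)) hx
  have h0 : ‖x + (0:ℝ) • EuclideanSpace.single j (1:ℝ)‖ = r := by simp [r]
  have hh : HasDerivAt (fun t : ℝ => h ‖x + t • EuclideanSpace.single j (1:ℝ)‖)
      (h' * (x j / r)) 0 := by
    have hhr : HasDerivAt h (deriv h r) ‖x + (0:ℝ) • EuclideanSpace.single j (1:ℝ)‖ := by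
      rw [h0]; exact (hhd r hr).hasDerivAt
    have := hhr.comp 0 hnorm
    exact this
  have hcoord : HasDerivAt (fun t : ℝ => (x + t • EuclideanSpace.single j (1:ℝ)) i)
      (if i = j then (1:ℝ) else 0) 0 := by
    have heq : (fun t : ℝ => (x + t • EuclideanSpace.single j (1:ℝ)) i)
        = fun t : ℝ => x i + t * (if i = j then (1:ℝ) else 0) := by
      funext t
      simp only [PiLp.add_apply, PiLp.smul_apply, EuclideanSpace.single_apply,
        smul_eq_mul, mul_ite, mul_one, mul_zero]
    rw [heq]
    have := ((hasDerivAt_id (0:ℝ)).mul_const (if i = j then (1:ℝ) else 0)).const_add (x i)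
    simpa only [one_mul, id_eq] using this
  have hprod := hh.mul hcoord
  have hderiv : deriv (fun t : ℝ => h ‖x + t • EuclideanSpace.single j (1:ℝ)‖
      * (x + t • EuclideanSpace.single j (1:ℝ)) i) 0
      = h' * (x j / r) * x i + h r * (if i = j then (1:ℝ) else 0) := by
    have := hprod.deriv
    simpa [r, Pi.mul_def] using this
  -- sum of squares
  have hr2 : ∑ k, x k ^ 2 = r ^ 2 := by
    show ∑ k, x k ^ 2 = ‖x‖ ^ 2
    rw [EuclideanSpace.norm_eq x, Real.sq_sqrt (by positivity)]
    simp [sq_abs]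
  -- compute the sum
  have hsum : ∑ k, (h r * x k) * Γ k i j
      = (1/2) * h r * ((f r * g' - 2 * f' * g r) / (r * f r * (f r + r ^ 2 * g r))
            * x i * x j * r ^ 2
          + (2 * r * g r - f') / (r * (f r + r ^ 2 * g r)) * r ^ 2
              * (if i = j then (1:ℝ) else 0)
          + f' / (r * f r) * (2 * x i * x j)) := by
    have key : ∀ k : Fin n, (h r * x k) * Γ k i j
        = (1/2) * h r * (((f r * g' - 2 * f' * g r) / (r * f r * (f r + r ^ 2 * g r))
              * x i * x j
            + (2 * r * g r - f') / (r * (f r + r ^ 2 * g r))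
              * (if i = j then (1:ℝ) else 0)) * x k ^ 2)
          + (1/2) * h r * (f' / (r * f r)) * x i * (if k = j then x k else 0)
          + (1/2) * h r * (f' / (r * f r)) * x j * (if k = i then x k else 0) := by
      intro k
      simp only [Γ]
      split_ifs <;> ring
    rw [Finset.sum_congr rfl fun k _ => key k]
    rw [Finset.sum_add_distrib, Finset.sum_add_distrib, ← Finset.mul_sum,
      ← Finset.mul_sum, ← Finset.mul_sum, ← Finset.mul_sum, hr2,
      Finset.sum_ite_eq' Finset.univ j (fun k => x k),
      Finset.sum_ite_eq' Finset.univ i (fun k => x k)]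
    simp only [Finset.mem_univ, if_true]
    ring
  rw [hderiv, hsum]
  have hfne' : f r ≠ 0 := hfne
  have hfgne' : f r + r ^ 2 * g r ≠ 0 := hfgne
  clear hderiv hsum hnorm hh hcoord hprod h0 hinner hr2 hfne hfgne hr
  clear_value r f' g' h' Γ
  by_cases hij : i = j
  · subst hij
    simp only [if_pos rfl]
    field_simp
    ring
  · simp only [if_neg hij]
    field_simp
    ring
end

section
/- Let n ≥ 2, let r > 0, let φ : [−r, r] → (0,∞) be continuous, and fix x ∈ ℝⁿ with |x| = r. Then the Lebesgue measure of the set {y ∈ ℝⁿ : y ≠ 0 and |y|·φ(⟨x,y⟩/|y|) < 1} equals Vol(Bⁿ) · ( ∫₀^π (sin t)^{n−2}·φ(r·cos t)^{−n} dt ) / ( ∫₀^π (sin t)^{n−2} dt ), where Vol(Bⁿ) is the Lebesgue measure of the Euclidean unit ball in ℝⁿ, |·| is the Euclidean norm and ⟨·,·⟩ the Euclidean inner product. -/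
open scoped RealInnerProductSpace
open MeasureTheory

open Set Metric Real
open scoped ENNReal

lemma radial_volume (k : ℕ) (A : Set ℝ) (hA : MeasurableSet A) :
    volume {z : EuclideanSpace ℝ (Fin (k+1)) | ‖z‖ ∈ A} =
      ((k+1 : ℕ) : ℝ≥0∞) * volume (ball (0 : EuclideanSpace ℝ (Fin (k+1))) 1)
        * ∫⁻ ρ in A ∩ Ioi 0, ENNReal.ofReal (ρ ^ k) := by
  set E := EuclideanSpace ℝ (Fin (k+1))
  have hdim : Module.finrank ℝ E = k + 1 := finrank_euclideanSpace_fin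
  set S : Set E := {z | ‖z‖ ∈ A} with hS
  set B : Set (Ioi (0:ℝ)) := Subtype.val ⁻¹' A with hB
  have hBm : MeasurableSet B := measurable_subtype_coe hA
  have h0 : volume S = volume (S \ {0}) := (measure_diff_null (measure_singleton 0)).symm
  have h1 : S \ {0} = Subtype.val '' (Subtype.val ⁻¹' S : Set ({0}ᶜ : Set E)) := by
    rw [Subtype.image_preimage_coe]
    ext z; simp [hS, diff_eq, and_comm]
  have h2 : (Subtype.val ⁻¹' S : Set ({0}ᶜ : Set E)) =
      (homeomorphUnitSphereProd E) ⁻¹' (univ ×ˢ B) := by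
    ext z
    simp [hS, hB]
  rw [h0, h1, ← comap_subtype_coe_apply (measurableSet_singleton (0:E)).compl, h2,
    (Measure.measurePreserving_homeomorphUnitSphereProd volume).measure_preimage
      ((MeasurableSet.univ.prod hBm).nullMeasurableSet),
    Measure.prod_prod, Measure.toSphere_apply_univ]
  have hd1 : Module.finrank ℝ E - 1 = k := by rw [hdim]; omega
  rw [hd1, hdim]
  congr 1
  rw [Measure.volumeIoiPow, withDensity_apply _ hBm,
    setLIntegral_subtype measurableSet_Ioi _ (fun a => ENNReal.ofReal (a ^ k))]
  rw [hB, Subtype.image_preimage_coe]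
  rw [inter_comm]

lemma sqrt_sum_sq_pos {a b : ℝ} (hb : b ≠ 0) : 0 < √(a^2 + b^2) :=
  Real.sqrt_pos.2 (by positivity)

lemma polar_image :
    polarCoord.symm '' (Ioi (0:ℝ) ×ˢ Ioo 0 π) = {p : ℝ × ℝ | 0 < p.2} := by
  ext p
  constructor
  · rintro ⟨⟨u, t⟩, ⟨hu, ht⟩, rfl⟩
    have : 0 < sin t := Real.sin_pos_of_pos_of_lt_pi ht.1 ht.2
    simpa [polarCoord_symm_apply] using mul_pos hu this
  · intro hp
    have hp2 : (0:ℝ) < p.2 := hp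
    set u : ℝ := √(p.1^2 + p.2^2) with hu_def
    have hu : 0 < u := sqrt_sum_sq_pos hp2.ne'
    have husq : u^2 = p.1^2 + p.2^2 := Real.sq_sqrt (by positivity)
    have habs : |p.1| < u := by
      rw [← Real.sqrt_sq_eq_abs]
      apply Real.sqrt_lt_sqrt (sq_nonneg _)
      nlinarith
    have h1 : -1 < p.1 / u := by
      rw [lt_div_iff₀ hu]
      nlinarith [abs_lt.1 habs]
    have h2 : p.1 / u < 1 := by
      rw [div_lt_one hu]
      nlinarith [abs_lt.1 habs]
    set t : ℝ := Real.arccos (p.1 / u) with ht_def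
    have hco : cos t = p.1 / u := Real.cos_arccos h1.le h2.le
    have hsi : sin t = p.2 / u := by
      rw [ht_def, Real.sin_arccos]
      have : 1 - (p.1/u)^2 = (p.2/u)^2 := by
        field_simp
        nlinarith
      rw [this, Real.sqrt_sq (by positivity)]
    refine ⟨(u, t), ⟨hu, ?_, ?_⟩, ?_⟩
    · exact Real.arccos_pos.2 h2
    · rw [ht_def, Real.arccos, sub_lt_iff_lt_add]
      have := Real.neg_pi_div_two_lt_arcsin.2 h1  -- -(π/2) < arcsin
      linarith
    · rw [polarCoord_symm_apply]
      simp only [hco, hsi]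
      have : u * (p.1 / u) = p.1 := by field_simp
      have h2' : u * (p.2 / u) = p.2 := by field_simp
      simp [this, h2']

lemma polar_upper (k : ℕ) (g : ℝ → ℝ) (hgc : Continuous g) (hgp : ∀ t, 0 < g t) :
    ∫⁻ p : ℝ × ℝ, (if 0 < p.2 ∧ √(p.1^2+p.2^2) * g (p.1 / √(p.1^2+p.2^2)) < 1
        then ENNReal.ofReal (p.2 ^ k) else 0)
      = ENNReal.ofReal ((∫ t in (0:ℝ)..π, sin t ^ k / g (cos t) ^ (k+2)) / (k+2)) := by
  set G : ℝ × ℝ → ℝ := fun p => √(p.1^2+p.2^2) * g (p.1 / √(p.1^2+p.2^2)) with hG_def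
  set F : ℝ × ℝ → ℝ≥0∞ := fun p =>
    if 0 < p.2 ∧ G p < 1 then ENNReal.ofReal (p.2 ^ k) else 0 with hF_def
  set U : Set (ℝ × ℝ) := {p | 0 < p.2} with hU_def
  have hU : IsOpen U := isOpen_lt continuous_const continuous_snd
  have hnn : Continuous (fun p : ℝ × ℝ => √(p.1^2 + p.2^2)) := by
    exact (((continuous_fst.pow 2).add (continuous_snd.pow 2)).sqrt)
  have hGc : ContinuousOn G U := by
    apply (hnn.continuousOn).mul
    apply hgc.comp_continuousOn
    exact continuous_fst.continuousOn.div hnn.continuousOn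
      (fun p hp => (sqrt_sum_sq_pos (ne_of_gt hp)).ne')
  set W : Set (ℝ × ℝ) := {p | 0 < p.2 ∧ G p < 1} with hW_def
  have hWU : W = U ∩ G ⁻¹' Iio 1 := by
    ext p; simp [hW_def, hU_def, and_comm]
  have hW : IsOpen W := by
    rw [hWU]; exact hGc.isOpen_inter_preimage hU isOpen_Iio
  have hFind : F = W.indicator (fun p => ENNReal.ofReal (p.2 ^ k)) := by
    funext p
    by_cases h : p ∈ W
    · rw [Set.indicator_of_mem h]; exact if_pos h
    · rw [Set.indicator_of_notMem h]; exact if_neg h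
  have hsub : Function.support F ⊆ U := by
    rw [hFind]
    exact (Set.support_indicator_subset).trans (fun p hp => hp.1)
  have step1 : ∫⁻ p, F p = ∫⁻ p in U, F p := by
    rw [← lintegral_indicator hU.measurableSet, Set.indicator_eq_self.2 hsub]
  set s : Set (ℝ × ℝ) := Ioi (0:ℝ) ×ˢ Ioo 0 π with hs_def
  have hs : MeasurableSet s := measurableSet_Ioi.prod measurableSet_Ioo
  set B : ℝ × ℝ → ℝ × ℝ →L[ℝ] ℝ × ℝ := fun p =>
    LinearMap.toContinuousLinearMap (Matrix.toLin (Module.Basis.finTwoProd ℝ) (Module.Basis.finTwoProd ℝ)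
      !![cos p.2, -p.1 * sin p.2; sin p.2, p.1 * cos p.2]) with hB_def
  have B_det : ∀ p, (B p).det = p.1 := by
    intro p
    conv_rhs => rw [← one_mul p.1, ← cos_sq_add_sin_sq p.2]
    simp only [hB_def, neg_mul, LinearMap.det_toContinuousLinearMap, LinearMap.det_toLin,
      Matrix.det_fin_two_of, sub_neg_eq_add]
    ring
  have hderiv : ∀ q ∈ s, HasFDerivWithinAt polarCoord.symm (B q) s q := fun q _ =>
    (hasFDerivAt_polarCoord_symm q).hasFDerivWithinAt
  have hinj : Set.InjOn polarCoord.symm s := by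
    apply polarCoord.symm.injOn.mono
    rintro ⟨u, t⟩ ⟨hu, ht⟩
    simp only [Set.mem_Ioo, polarCoord_target, Set.mem_prod, Set.mem_Ioi] at ht ⊢
    have := pi_pos
    exact ⟨hu, by constructor <;> linarith [ht.1, ht.2]⟩
  have himg : polarCoord.symm '' s = U := polar_image
  have step2 : ∫⁻ p in U, F p = ∫⁻ q in s, ENNReal.ofReal |(B q).det| * F (polarCoord.symm q) := by
    rw [← himg]
    exact lintegral_image_eq_lintegral_abs_det_fderiv_mul volume hs hderiv hinj F
  set H : ℝ × ℝ → ℝ≥0∞ := fun q => ENNReal.ofReal q.1 *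
      (if q.1 * g (cos q.2) < 1 then ENNReal.ofReal ((q.1 * sin q.2) ^ k) else 0) with hH_def
  have step3 : ∫⁻ q in s, ENNReal.ofReal |(B q).det| * F (polarCoord.symm q) = ∫⁻ q in s, H q := by
    apply setLIntegral_congr_fun hs
    rintro ⟨u, t⟩ ⟨hu, ht⟩
    simp only [Set.mem_Ioi] at hu
    simp only [Set.mem_Ioo] at ht
    have hsin : 0 < sin t := Real.sin_pos_of_pos_of_lt_pi ht.1 ht.2
    have hdet : |(B (u, t)).det| = u := by rw [B_det]; exact abs_of_pos hu
    have hpc : polarCoord.symm (u, t) = (u * cos t, u * sin t) := polarCoord_symm_apply _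
    have hnn2 : √((u * cos t)^2 + (u * sin t)^2) = u := by
      have : (u * cos t)^2 + (u * sin t)^2 = u^2 := by
        have := sin_sq_add_cos_sq t; nlinarith
      rw [this, Real.sqrt_sq hu.le]
    have hGval : G (u * cos t, u * sin t) = u * g (cos t) := by
      rw [hG_def]
      simp only
      rw [hnn2, mul_div_cancel_left₀ _ hu.ne']
    have hFval : F (polarCoord.symm (u, t))
        = if u * g (cos t) < 1 then ENNReal.ofReal ((u * sin t) ^ k) else 0 := by
      rw [hpc, hF_def]
      simp only [hGval]
      rw [if_congr (and_iff_right (mul_pos hu hsin)) rfl rfl]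
    beta_reduce
    rw [hdet, hFval, hH_def]
  have hHm : Measurable H := by
    have hop : MeasurableSet {q : ℝ × ℝ | q.1 * g (cos q.2) < 1} :=
      (isOpen_lt (continuous_fst.mul (hgc.comp (continuous_cos.comp continuous_snd)))
        continuous_const).measurableSet
    exact (measurable_fst.ennreal_ofReal).mul
      (Measurable.ite hop ((measurable_fst.mul
        ((continuous_sin.comp continuous_snd).measurable)).pow_const k).ennreal_ofReal
        measurable_const)
  have step4 : ∫⁻ q in s, H q = ∫⁻ t in Ioo 0 π, ∫⁻ u in Ioi (0:ℝ), H (u, t) := by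
    rw [hs_def, Measure.volume_eq_prod, ← Measure.prod_restrict]
    exact lintegral_prod_symm H (hHm.aemeasurable)
  set G2 : ℝ → ℝ := fun t => sin t ^ k / g (cos t) ^ (k+2) / (k+2) with hG2_def
  have step5 : ∀ t ∈ Ioo (0:ℝ) π,
      ∫⁻ u in Ioi (0:ℝ), H (u, t) = ENNReal.ofReal (G2 t) := by
    intro t ht
    have hsin : 0 < sin t := Real.sin_pos_of_pos_of_lt_pi ht.1 ht.2
    have hgt : 0 < g (cos t) := hgp _
    set c : ℝ := 1 / g (cos t) with hc_def
    have hc0 : 0 < c := by positivity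
    have hpt : ∀ u ∈ Ioi (0:ℝ), H (u, t)
        = (Iio c).indicator (fun u => ENNReal.ofReal (u ^ (k+1) * sin t ^ k)) u := by
      intro u hu
      simp only [Set.mem_Ioi] at hu
      have hiff : u * g (cos t) < 1 ↔ u ∈ Iio c := by
        rw [Set.mem_Iio, hc_def, lt_div_iff₀ hgt]
      rw [hH_def]
      by_cases h : u ∈ Iio c
      · rw [Set.indicator_of_mem h]
        simp only
        rw [if_pos (hiff.2 h), ← ENNReal.ofReal_mul hu.le]
        congr 1
        rw [mul_pow, pow_succ]
        ring
      · rw [Set.indicator_of_notMem h]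
        simp only
        rw [if_neg (fun hlt => h (hiff.1 hlt)), mul_zero]
    rw [setLIntegral_congr_fun measurableSet_Ioi (fun u hu => hpt u hu),
      lintegral_indicator measurableSet_Iio, Measure.restrict_restrict measurableSet_Iio,
      Set.Iio_inter_Ioi]
    have hmul : ∀ u : ℝ, ENNReal.ofReal (u ^ (k+1) * sin t ^ k)
        = ENNReal.ofReal (u ^ (k+1)) * ENNReal.ofReal (sin t ^ k) := fun u =>
      ENNReal.ofReal_mul' (by positivity)
    simp only [hmul]
    rw [lintegral_mul_const' _ _ ENNReal.ofReal_ne_top]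
    have hint : ∫⁻ u in Ioo (0:ℝ) c, ENNReal.ofReal (u ^ (k+1))
        = ENNReal.ofReal (c ^ (k+2) / (k+2)) := by
      rw [← ofReal_integral_eq_lintegral_ofReal]
      · congr 1
        rw [← MeasureTheory.integral_Ioc_eq_integral_Ioo,
          ← intervalIntegral.integral_of_le hc0.le, integral_pow]
        norm_num
        ring_nf
      · exact ((intervalIntegral.intervalIntegrable_pow (k+1)).1).mono_set Set.Ioo_subset_Ioc_self
      · filter_upwards [ae_restrict_mem measurableSet_Ioo] with u hu
        exact pow_nonneg hu.1.le _
    rw [hint, ← ENNReal.ofReal_mul (by positivity)]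
    congr 1
    rw [hG2_def, hc_def]
    field_simp
    rw [div_pow, one_pow, div_mul_cancel₀ _ (pow_ne_zero _ hgt.ne')]
  have step6 : ∫⁻ t in Ioo (0:ℝ) π, ∫⁻ u in Ioi (0:ℝ), H (u, t)
      = ∫⁻ t in Ioo (0:ℝ) π, ENNReal.ofReal (G2 t) :=
    setLIntegral_congr_fun measurableSet_Ioo (fun t ht => step5 t ht)
  have hG2c : Continuous G2 := by
    apply Continuous.div_const
    exact (continuous_sin.pow k).div ((hgc.comp continuous_cos).pow (k+2))
      (fun t => pow_ne_zero _ (hgp _).ne')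
  have step7 : ∫⁻ t in Ioo (0:ℝ) π, ENNReal.ofReal (G2 t)
      = ENNReal.ofReal ((∫ t in (0:ℝ)..π, sin t ^ k / g (cos t) ^ (k+2)) / (k+2)) := by
    rw [← ofReal_integral_eq_lintegral_ofReal]
    · congr 1
      rw [← MeasureTheory.integral_Ioc_eq_integral_Ioo,
        ← intervalIntegral.integral_of_le pi_pos.le, hG2_def]
      rw [intervalIntegral.integral_div]
    · exact (hG2c.integrableOn_Icc).mono_set Set.Ioo_subset_Icc_self
    · filter_upwards [ae_restrict_mem measurableSet_Ioo] with t ht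
      have hsin : 0 < sin t := Real.sin_pos_of_pos_of_lt_pi ht.1 ht.2
      have := hgp (cos t)
      rw [hG2_def]
      positivity
  rw [step1, step2, step3, step4, step6, step7]

lemma sqrt_sum_sq_pos' {a b : ℝ} (hb : b ≠ 0) : 0 < √(a^2 + b^2) :=
  Real.sqrt_pos.2 (by positivity)

lemma upperW_isOpen (g : ℝ → ℝ) (hgc : Continuous g) :
    IsOpen {p : ℝ × ℝ | 0 < p.2 ∧ √(p.1^2+p.2^2) * g (p.1 / √(p.1^2+p.2^2)) < 1} := by
  set G : ℝ × ℝ → ℝ := fun p => √(p.1^2+p.2^2) * g (p.1 / √(p.1^2+p.2^2)) with hG_def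
  set U : Set (ℝ × ℝ) := {p | 0 < p.2} with hU_def
  have hU : IsOpen U := isOpen_lt continuous_const continuous_snd
  have hnn : Continuous (fun p : ℝ × ℝ => √(p.1^2 + p.2^2)) :=
    ((continuous_fst.pow 2).add (continuous_snd.pow 2)).sqrt
  have hGc : ContinuousOn G U := by
    apply (hnn.continuousOn).mul
    apply hgc.comp_continuousOn
    exact continuous_fst.continuousOn.div hnn.continuousOn
      (fun p hp => (sqrt_sum_sq_pos' (ne_of_gt hp)).ne')
  have hWU : {p : ℝ × ℝ | 0 < p.2 ∧ G p < 1} = U ∩ G ⁻¹' Iio 1 := by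
    ext p; simp [hU_def, and_comm]
  rw [show {p : ℝ × ℝ | 0 < p.2 ∧ √(p.1^2+p.2^2) * g (p.1 / √(p.1^2+p.2^2)) < 1}
    = {p : ℝ × ℝ | 0 < p.2 ∧ G p < 1} from rfl, hWU]
  exact hGc.isOpen_inter_preimage hU isOpen_Iio


lemma key' (k : ℕ) (r : ℝ) (hr : 0 < r) (φ : ℝ → ℝ) (hc : Continuous φ)
    (hp : ∀ s, 0 < φ s) (x : EuclideanSpace ℝ (Fin (k+2))) (hx : ‖x‖ = r) :
    volume {y : EuclideanSpace ℝ (Fin (k+2)) | y ≠ 0 ∧ ‖y‖ * φ (⟪x, y⟫ / ‖y‖) < 1}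
      = ((k+1 : ℕ) : ℝ≥0∞) * volume (ball (0 : EuclideanSpace ℝ (Fin (k+1))) 1)
        * ENNReal.ofReal ((∫ t in (0:ℝ)..π, sin t ^ k / φ (r * cos t) ^ (k+2)) / (k+2)) := by
  classical
  set g : ℝ → ℝ := fun s => φ (r * s) with hg_def
  have hgc : Continuous g := hc.comp (continuous_const.mul continuous_id)
  have hgp : ∀ t, 0 < g t := fun t => hp _
  -- the reference point
  set x₀ : EuclideanSpace ℝ (Fin (k+2)) := r • EuclideanSpace.single (0 : Fin (k+2)) (1:ℝ) with hx₀_def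
  have hx₀ : ‖x₀‖ = r := by
    rw [hx₀_def, norm_smul, EuclideanSpace.norm_single]
    simp [abs_of_pos hr]
  set T : EuclideanSpace ℝ (Fin (k+2)) ≃ₗᵢ[ℝ] EuclideanSpace ℝ (Fin (k+2)) := Submodule.reflection (ℝ ∙ (x₀ - x))ᗮ with hT_def
  have hT : T x₀ = x := Submodule.reflection_sub (hx₀.trans hx.symm)
  -- the product-space set
  set nnP : ℝ × (Fin (k+1) → ℝ) → ℝ := fun p => √(p.1^2 + ∑ i, p.2 i^2) with hnnP_def
  have hnnPc : Continuous nnP := by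
    apply Continuous.sqrt
    exact (continuous_fst.pow 2).add
      (continuous_finset_sum _ fun i _ => ((continuous_apply i).comp continuous_snd).pow 2)
  have hnnP_zero : ∀ p, nnP p = 0 ↔ p = 0 := by
    intro p
    constructor
    · intro h
      have hsumnn : (0:ℝ) ≤ ∑ i, p.2 i ^ 2 :=
        Finset.sum_nonneg fun i _ => sq_nonneg _
      have h2 : p.1^2 + ∑ i, p.2 i^2 = 0 := by
        have := Real.sqrt_eq_zero (by positivity : (0:ℝ) ≤ p.1^2 + ∑ i, p.2 i^2)
        rw [hnnP_def] at h
        exact this.1 h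
      have h3 : p.1 = 0 := by nlinarith [sq_nonneg p.1]
      have hsum0 : ∑ i, p.2 i ^ 2 = 0 := by nlinarith [sq_nonneg p.1]
      have h4 : ∀ i, p.2 i = 0 := by
        intro i
        have := (Finset.sum_eq_zero_iff_of_nonneg
          (fun i _ => sq_nonneg (p.2 i))).1 hsum0 i (Finset.mem_univ i)
        exact pow_eq_zero_iff two_ne_zero |>.mp this
      exact Prod.ext h3 (funext h4)
    · rintro rfl
      simp [hnnP_def]
  -- the measurable equivalence to ℝ × (Fin (k+1) → ℝ)
  set ψ : EuclideanSpace ℝ (Fin (k+2)) ≃ᵐ ℝ × (Fin (k+1) → ℝ) :=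
    ((MeasurableEquiv.toLp 2 (Fin (k+2) → ℝ)).symm).trans
      (MeasurableEquiv.piFinSuccAbove (fun _ : Fin (k+2) => ℝ) 0) with hψ_def
  have hψ : MeasurePreserving (⇑ψ) volume volume := by
    have h1 := EuclideanSpace.volume_preserving_symm_measurableEquiv_toLp (Fin (k+2))
    have h2 := volume_preserving_piFinSuccAbove (fun _ : Fin (k+2) => ℝ) 0
    exact h2.comp h1
  have hψ1 : ∀ y : EuclideanSpace ℝ (Fin (k+2)), (ψ y).1 = y 0 := by
    intro y
    simp [hψ_def, MeasurableEquiv.piFinSuccAbove_apply, MeasurableEquiv.coe_toLp_symm]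
  have hψ2 : ∀ (y : EuclideanSpace ℝ (Fin (k+2))) (j : Fin (k+1)), (ψ y).2 j = y j.succ := by
    intro y j
    simp [hψ_def, MeasurableEquiv.piFinSuccAbove_apply, MeasurableEquiv.coe_toLp_symm,
      Fin.removeNth, Fin.succAbove_zero]
    rfl
  have hnorm : ∀ y : EuclideanSpace ℝ (Fin (k+2)), ‖y‖ = nnP (ψ y) := by
    intro y
    rw [EuclideanSpace.norm_eq, Fin.sum_univ_succ, hnnP_def]
    simp only [Real.norm_eq_abs, sq_abs, hψ1, hψ2]
  have hne : ∀ y : EuclideanSpace ℝ (Fin (k+2)), ψ y = 0 ↔ y = 0 := by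
    intro y
    rw [← hnnP_zero, ← hnorm, norm_eq_zero]
  -- the set in the product space
  set S₁ : Set (ℝ × (Fin (k+1) → ℝ)) :=
    {p | p ≠ 0 ∧ nnP p * g (p.1 / nnP p) < 1} with hS₁_def
  have hS₁open : IsOpen S₁ := by
    have hU : IsOpen {p : ℝ × (Fin (k+1) → ℝ) | p ≠ 0} :=
      isOpen_compl_singleton
    have hnnP_pos : ∀ p : ℝ × (Fin (k+1) → ℝ), p ≠ 0 → 0 < nnP p := by
      intro p hp
      rcases lt_or_eq_of_le (Real.sqrt_nonneg (p.1^2 + ∑ i, p.2 i^2)) with h | h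
      · exact h
      · exact absurd ((hnnP_zero p).1 h.symm) hp
    have hGc : ContinuousOn (fun p => nnP p * g (p.1 / nnP p))
        {p : ℝ × (Fin (k+1) → ℝ) | p ≠ 0} := by
      apply (hnnPc.continuousOn).mul
      apply hgc.comp_continuousOn
      exact continuous_fst.continuousOn.div hnnPc.continuousOn
        (fun p hp => (hnnP_pos p hp).ne')
    have : S₁ = {p : ℝ × (Fin (k+1) → ℝ) | p ≠ 0} ∩
        (fun p => nnP p * g (p.1 / nnP p)) ⁻¹' Iio 1 := by
      ext p; simp [hS₁_def, and_comm]
    rw [this]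
    exact hGc.isOpen_inter_preimage hU isOpen_Iio
  -- the original set as a preimage
  have hsets : {y : EuclideanSpace ℝ (Fin (k+2)) | y ≠ 0 ∧ ‖y‖ * φ (⟪x, y⟫ / ‖y‖) < 1}
      = (fun y => ψ (T.symm y)) ⁻¹' S₁ := by
    ext y
    simp only [Set.mem_setOf_eq, Set.mem_preimage, hS₁_def]
    have hinner : ⟪x, y⟫ = r * (T.symm y) 0 := by
      rw [← hT]
      calc ⟪T x₀, y⟫ = ⟪T x₀, T (T.symm y)⟫ := by rw [T.apply_symm_apply]
        _ = ⟪x₀, T.symm y⟫ := T.inner_map_map _ _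
        _ = r * (T.symm y) 0 := by
            rw [hx₀_def, real_inner_smul_left, EuclideanSpace.inner_single_left]
            simp
    have hny : ‖y‖ = nnP (ψ (T.symm y)) := by
      rw [← hnorm, ← T.symm.norm_map y]
    have hy0 : y ≠ 0 ↔ ψ (T.symm y) ≠ 0 := by
      rw [ne_eq, ne_eq, hne, EmbeddingLike.map_eq_zero_iff]
    have h1 : (ψ (T.symm y)).1 = (T.symm y) 0 := hψ1 _
    rw [hny, hinner, hy0, h1]
    have : r * (T.symm y) 0 / nnP (ψ (T.symm y))
        = r * ((T.symm y) 0 / nnP (ψ (T.symm y))) := by ring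
    rw [this, hg_def]
  have hvol1 : volume {y : EuclideanSpace ℝ (Fin (k+2)) | y ≠ 0 ∧ ‖y‖ * φ (⟪x, y⟫ / ‖y‖) < 1}
      = volume S₁ := by
    rw [hsets]
    have hmp : MeasurePreserving (fun y => ψ (T.symm y)) volume volume :=
      hψ.comp (T.symm.measurePreserving)
    exact hmp.measure_preimage hS₁open.measurableSet.nullMeasurableSet
  -- Fubini
  set Fp : ℝ × ℝ → ℝ≥0∞ := fun p =>
    if 0 < p.2 ∧ √(p.1^2+p.2^2) * g (p.1 / √(p.1^2+p.2^2)) < 1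
      then ENNReal.ofReal (p.2 ^ k) else 0 with hFp_def
  have hFpm : Measurable Fp := by
    apply Measurable.ite (upperW_isOpen g hgc).measurableSet
    · exact (measurable_snd.pow_const k).ennreal_ofReal
    · exact measurable_const
  set C₁ : ℝ≥0∞ := ((k+1 : ℕ) : ℝ≥0∞) * volume (ball (0 : EuclideanSpace ℝ (Fin (k+1))) 1)
    with hC₁_def
  have hC₁top : C₁ ≠ ⊤ :=
    ENNReal.mul_ne_top (ENNReal.natCast_ne_top _) measure_ball_lt_top.ne
  have hslice : ∀ a : ℝ, a ≠ 0 →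
      volume (Prod.mk a ⁻¹' S₁) = C₁ * ∫⁻ ρ, Fp (a, ρ) := by
    intro a ha
    have hnnA : ∀ ρ : ℝ, (0:ℝ) < √(a^2 + ρ^2) := fun ρ =>
      Real.sqrt_pos.2 (by positivity)
    -- the slice as a set in the pi space
    have h1 : Prod.mk a ⁻¹' S₁
        = {z : Fin (k+1) → ℝ | nnP (a, z) * g (a / nnP (a, z)) < 1} := by
      ext z
      simp only [Set.mem_preimage, hS₁_def, Set.mem_setOf_eq]
      have : (a, z) ≠ 0 := by
        intro h
        exact ha (congrArg Prod.fst h)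
      tauto
    -- transfer to Euclidean space
    set e := (MeasurableEquiv.toLp 2 (Fin (k+1) → ℝ)).symm with he_def
    have hsum : ∀ z : EuclideanSpace ℝ (Fin (k+1)), ∑ i, (e z i)^2 = ‖z‖^2 := by
      intro z
      rw [EuclideanSpace.norm_eq, Real.sq_sqrt (by positivity)]
      simp [he_def, MeasurableEquiv.coe_toLp_symm, Real.norm_eq_abs, sq_abs]
    set A : Set ℝ := {ρ : ℝ | √(a^2 + ρ^2) * g (a / √(a^2 + ρ^2)) < 1} with hA_def
    have hAopen : IsOpen A := by
      have hcont : Continuous (fun ρ : ℝ => √(a^2 + ρ^2) * g (a / √(a^2 + ρ^2))) := by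
        have hs : Continuous (fun ρ : ℝ => √(a^2 + ρ^2)) :=
          ((continuous_const.add (continuous_id.pow 2)).sqrt)
        exact hs.mul (hgc.comp (continuous_const.div hs (fun ρ => (hnnA ρ).ne')))
      exact isOpen_lt hcont continuous_const
    have h2 : e ⁻¹' (Prod.mk a ⁻¹' S₁) = {z : EuclideanSpace ℝ (Fin (k+1)) | ‖z‖ ∈ A} := by
      rw [h1]
      ext z
      simp only [Set.mem_preimage, Set.mem_setOf_eq, hA_def, hnnP_def]
      rw [hsum z]
    have hAm : MeasurableSet A := hAopen.measurableSet
    have hpre : MeasurableSet (Prod.mk a ⁻¹' S₁) :=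
      hS₁open.measurableSet.preimage measurable_prodMk_left
    have h3 : volume (Prod.mk a ⁻¹' S₁)
        = volume {z : EuclideanSpace ℝ (Fin (k+1)) | ‖z‖ ∈ A} := by
      rw [← h2]
      exact ((EuclideanSpace.volume_preserving_symm_measurableEquiv_toLp
        (Fin (k+1))).measure_preimage hpre.nullMeasurableSet).symm
    have h4 : ∀ ρ : ℝ, (A ∩ Ioi 0).indicator (fun ρ => ENNReal.ofReal (ρ ^ k)) ρ
        = Fp (a, ρ) := by
      intro ρ
      by_cases hmem : ρ ∈ A ∩ Ioi 0
      · rw [Set.indicator_of_mem hmem]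
        exact (if_pos ⟨hmem.2, hmem.1⟩).symm
      · rw [Set.indicator_of_notMem hmem]
        refine (if_neg ?_).symm
        intro hcon
        exact hmem ⟨hcon.2, hcon.1⟩
    rw [h3, radial_volume k A hAm, ← hC₁_def,
      ← lintegral_indicator (hAm.inter measurableSet_Ioi)]
    exact congrArg (C₁ * ·) (lintegral_congr h4)
  have hae : ∀ᵐ a : ℝ, a ≠ 0 := by
    have h0 : {a : ℝ | ¬ a ≠ 0} = {0} := by ext a; simp
    rw [ae_iff, h0]
    exact measure_singleton 0
  have hvol2 : volume S₁ = C₁ * ∫⁻ p : ℝ × ℝ, Fp p := by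
    rw [Measure.volume_eq_prod, Measure.prod_apply hS₁open.measurableSet]
    have hcg : ∀ᵐ a : ℝ, volume (Prod.mk a ⁻¹' S₁) = C₁ * ∫⁻ ρ, Fp (a, ρ) := by
      filter_upwards [hae] with a ha using hslice a ha
    rw [lintegral_congr_ae hcg, lintegral_const_mul' C₁ _ hC₁top]
    congr 1
    rw [Measure.volume_eq_prod, lintegral_prod Fp hFpm.aemeasurable]
  rw [hvol1, hvol2, polar_upper k g hgc hgp, hC₁_def, hg_def]


/-- Busemann–Hausdorff part of Lemma 2.2: the volume of the unit ball of the
spherically symmetric Finsler norm `y ↦ |y| φ(⟨x,y⟩/|y|)` at a point `x` with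
`|x| = r` equals `Vol(Bⁿ) · (∫₀^π sin^{n−2}t · φ(r cos t)^{−n} dt)/(∫₀^π sin^{n−2}t dt)`. -/
theorem busemann_hausdorff_unit_ball_volume
    (n : ℕ) (hn : 2 ≤ n) (r : ℝ) (hr : 0 < r)
    (φ : ℝ → ℝ)
    (hφ_cont : ContinuousOn φ (Set.Icc (-r) r))
    (hφ_pos : ∀ s ∈ Set.Icc (-r) r, 0 < φ s)
    (x : EuclideanSpace ℝ (Fin n)) (hx : ‖x‖ = r) :
    volume {y : EuclideanSpace ℝ (Fin n) | y ≠ 0 ∧ ‖y‖ * φ (⟪x, y⟫ / ‖y‖) < 1}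
      = volume (Metric.ball (0 : EuclideanSpace ℝ (Fin n)) 1)
        * ENNReal.ofReal
          ((∫ t in (0:ℝ)..Real.pi, Real.sin t ^ (n - 2) / φ (r * Real.cos t) ^ n)
            / ∫ t in (0:ℝ)..Real.pi, Real.sin t ^ (n - 2)) := by
  obtain ⟨k, rfl⟩ : ∃ k, n = k + 2 := ⟨n - 2, by omega⟩
  simp only [Nat.add_sub_cancel]
  -- clamp extension of φ
  set φ' : ℝ → ℝ := fun s => φ (max (-r) (min r s)) with hφ'_def
  have hclamp_mem : ∀ s : ℝ, max (-r) (min r s) ∈ Set.Icc (-r) r := by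
    intro s
    refine ⟨le_max_left _ _, max_le (by linarith) (min_le_left _ _)⟩
  have hφ'c : Continuous φ' := by
    apply hφ_cont.comp_continuous
    · exact continuous_const.max (continuous_const.min continuous_id)
    · exact hclamp_mem
  have hφ'p : ∀ s, 0 < φ' s := fun s => hφ_pos _ (hclamp_mem s)
  have hφ'eq : ∀ s ∈ Set.Icc (-r) r, φ' s = φ s := by
    intro s hs
    rw [hφ'_def]
    simp only
    rw [min_eq_right hs.2, max_eq_right hs.1]
  have hseteq : {y : EuclideanSpace ℝ (Fin (k+2)) | y ≠ 0 ∧ ‖y‖ * φ (⟪x, y⟫ / ‖y‖) < 1}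
      = {y : EuclideanSpace ℝ (Fin (k+2)) | y ≠ 0 ∧ ‖y‖ * φ' (⟪x, y⟫ / ‖y‖) < 1} := by
    ext y
    simp only [Set.mem_setOf_eq, ne_eq]
    by_cases hy : y = 0
    · simp [hy]
    · have hny : 0 < ‖y‖ := norm_pos_iff.2 hy
      have habs : |⟪x, y⟫ / ‖y‖| ≤ r := by
        rw [abs_div, abs_of_pos hny, div_le_iff₀ hny]
        calc |⟪x, y⟫| ≤ ‖x‖ * ‖y‖ := abs_real_inner_le_norm x y
          _ = r * ‖y‖ := by rw [hx]
      have harg : ⟪x, y⟫ / ‖y‖ ∈ Set.Icc (-r) r := by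
        rw [Set.mem_Icc]
        exact abs_le.1 habs
      rw [hφ'eq _ harg]
  have hinteq : (∫ t in (0:ℝ)..π, sin t ^ k / φ (r * cos t) ^ (k+2))
      = ∫ t in (0:ℝ)..π, sin t ^ k / φ' (r * cos t) ^ (k+2) := by
    apply intervalIntegral.integral_congr
    intro t _
    have hmem : r * cos t ∈ Set.Icc (-r) r := by
      constructor <;> nlinarith [neg_one_le_cos t, cos_le_one t, hr.le]
    simp only [hφ'eq _ hmem]
  have h1 := key' k r hr φ' hφ'c hφ'p x hx
  have hone := key' k r hr (fun _ => 1) continuous_const (fun _ => one_pos) x hx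
  have hball : volume (ball (0 : EuclideanSpace ℝ (Fin (k+2))) 1)
      = ((k+1:ℕ) : ℝ≥0∞) * volume (ball (0 : EuclideanSpace ℝ (Fin (k+1))) 1)
        * ENNReal.ofReal ((∫ t in (0:ℝ)..π, sin t ^ k) / (k+2)) := by
    have hset1 : {y : EuclideanSpace ℝ (Fin (k+2)) | y ≠ 0 ∧
        ‖y‖ * (fun _ : ℝ => (1:ℝ)) (⟪x, y⟫ / ‖y‖) < 1}
        = ball (0 : EuclideanSpace ℝ (Fin (k+2))) 1 \ {0} := by
      ext y
      simp only [Set.mem_setOf_eq, Set.mem_diff, mem_ball, dist_zero_right,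
        Set.mem_singleton_iff, mul_one, ne_eq]
      tauto
    rw [← measure_diff_null (measure_singleton (0 : EuclideanSpace ℝ (Fin (k+2)))),
      ← hset1, hone]
    congr 2
    simp
  rw [hseteq, h1, hball]
  set I := ∫ t in (0:ℝ)..π, sin t ^ k with hI
  have hIpos : 0 < I :=
    intervalIntegral.intervalIntegral_pos_of_pos_on
      ((continuous_sin.pow k).intervalIntegrable 0 π)
      (fun t ht => pow_pos (sin_pos_of_pos_of_lt_pi ht.1 ht.2) k) pi_pos
  rw [hinteq]
  set J := ∫ t in (0:ℝ)..π, sin t ^ k / φ' (r * cos t) ^ (k+2) with hJ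
  have halg : ENNReal.ofReal (I/(k+2)) * ENNReal.ofReal (J/I) = ENNReal.ofReal (J/(k+2)) := by
    rw [← ENNReal.ofReal_mul (by positivity : (0:ℝ) ≤ I / (k+2))]
    congr 1
    field_simp
  rw [mul_assoc (((k+1:ℕ) : ℝ≥0∞) * volume (ball (0 : EuclideanSpace ℝ (Fin (k+1))) 1)), halg]
end
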